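/- arXiv:2110.12036 — 6 statements merged into one kernel-verified Lean document; each statement's English description precedes it below -/
import Mathlib

section
/- In a maximal ancestral graph (MAG), if a vertex X is removable, then for every collider path (X, V₁, …, V_m, Y) and every vertex Z ∉ {X, Y, V₁, …, V_m} such that X and all V₁,…,V_m are parents of Z, the vertices Y and Z are adjacent. -/
/-- A mixed graph with directed (`dir x y` : x → y), bidirected and undirected edges. -/
structure MixedGraph (V : Type*) where
  dir : V → V → Prop
  bi : V → V → Prop
  und : V → V → Prop
  bi_symm : ∀ x y, bi x y → bi y x
  und_symm : ∀ x y, und x y → und y x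

namespace MixedGraph

variable {V : Type*}

def adj (G : MixedGraph V) (x y : V) : Prop :=
  G.dir x y ∨ G.dir y x ∨ G.bi x y ∨ G.und x y

/-- There is an arrowhead at `y` on the edge between `x` and `y`. -/
def head (G : MixedGraph V) (x y : V) : Prop := G.dir x y ∨ G.bi x y

def pa (G : MixedGraph V) (x : V) : Set V := {y | G.dir y x}
def child (G : MixedGraph V) (x : V) : Set V := {y | G.dir x y}
def nbr (G : MixedGraph V) (x : V) : Set V := {y | G.und x y}
def spouse (G : MixedGraph V) (x : V) : Set V := {y | G.bi x y}

/-- `x` is an ancestor of `y` (every vertex is an ancestor of itself). -/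
def anc (G : MixedGraph V) (x y : V) : Prop := Relation.ReflTransGen G.dir x y

def ancSet (G : MixedGraph V) (S : Set V) : Set V := {x | ∃ y ∈ S, G.anc x y}

/-- The set of descendants of `x` (including `x` itself). -/
def desc (G : MixedGraph V) (x : V) : Set V := {y | G.anc x y}

/-- A path, encoded as a duplicate-free list of at least two vertices with
consecutive vertices adjacent. -/
def IsPath (G : MixedGraph V) (p : List V) : Prop :=
  p.Chain' G.adj ∧ p.Nodup ∧ 2 ≤ p.length

def IsPathBetween (G : MixedGraph V) (p : List V) (x y : V) : Prop :=
  G.IsPath p ∧ p.head? = some x ∧ p.getLast? = some y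

/-- The vertex at (internal) position `i` of `p` is a collider: both incident
path edges have an arrowhead at it. -/
def ColliderAt (G : MixedGraph V) (p : List V) (i : ℕ) : Prop :=
  ∃ a v c, p[i-1]? = some a ∧ p[i]? = some v ∧ p[i+1]? = some c ∧
    G.head a v ∧ G.head c v

/-- A collider path: every non-endpoint vertex is a collider. -/
def IsColliderPath (G : MixedGraph V) (p : List V) : Prop :=
  G.IsPath p ∧ ∀ i, 1 ≤ i → i + 1 < p.length → G.ColliderAt p i

/-- `p` is an m-connecting path between `x` and `y` relative to `Z`. -/
def MConn (G : MixedGraph V) (p : List V) (x y : V) (Z : Set V) : Prop :=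
  G.IsPathBetween p x y ∧
  ∀ i v, 1 ≤ i → i + 1 < p.length → p[i]? = some v →
    (G.ColliderAt p i → v ∈ G.ancSet ({x, y} ∪ Z)) ∧
    (¬ G.ColliderAt p i → v ∉ Z)

/-- `Z` m-separates `x` and `y` in `G`. -/
def MSep (G : MixedGraph V) (x y : V) (Z : Set V) : Prop :=
  ∀ p, ¬ G.MConn p x y Z

/-- Induced subgraph over a set `S` of vertices. -/
def induce (G : MixedGraph V) (S : Set V) : MixedGraph V where
  dir x y := G.dir x y ∧ x ∈ S ∧ y ∈ S
  bi x y := G.bi x y ∧ x ∈ S ∧ y ∈ S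
  und x y := G.und x y ∧ x ∈ S ∧ y ∈ S
  bi_symm := fun x y h => ⟨G.bi_symm x y h.1, h.2.2, h.2.1⟩
  und_symm := fun x y h => ⟨G.und_symm x y h.1, h.2.2, h.2.1⟩

/-- `X` is removable in `G`: the induced subgraph on the remaining vertices
imposes exactly the same m-separation relations over them as `G`. -/
def Removable (G : MixedGraph V) (X : V) : Prop :=
  ∀ Y W : V, Y ≠ X → W ≠ X → Y ≠ W →
    ∀ Z : Set V, Z ⊆ {v | v ≠ X ∧ v ≠ Y ∧ v ≠ W} →
      (G.MSep Y W Z ↔ (G.induce {v | v ≠ X}).MSep Y W Z)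

/-- Ancestral: no directed cycles, no almost directed cycles, and endpoints of
undirected edges have no parents or spouses. -/
def Ancestral (G : MixedGraph V) : Prop :=
  (∀ x y, G.dir x y → ¬ G.anc y x) ∧
  (∀ x y, G.bi x y → ¬ G.anc y x) ∧
  (∀ x y, G.und x y → ∀ z, ¬ G.dir z x ∧ ¬ G.bi z x)

/-- A maximal ancestral graph: ancestral, and any two non-adjacent vertices are
m-separated by some set. -/
def IsMAG (G : MixedGraph V) : Prop :=
  G.Ancestral ∧
  ∀ x y, x ≠ y → ¬ G.adj x y →
    ∃ Z : Set V, Z ⊆ {v | v ≠ x ∧ v ≠ y} ∧ G.MSep x y Z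

/-- Markov boundary of `x`: the vertices with a collider path to `x`. -/
def Mb (G : MixedGraph V) (x : V) : Set V :=
  {y | ∃ p, G.IsColliderPath p ∧ p.head? = some y ∧ p.getLast? = some x}

/-- District of `x`: vertices joined to `x` by a path of bidirected edges. -/
def district (G : MixedGraph V) (x : V) : Set V :=
  {y | Relation.ReflTransGen G.bi x y}

/-- `Pa⁺(x) = Pa(x) ∪ Dis(x) ∪ Pa(Dis(x)) ∪ N(x)`. -/
def paPlus (G : MixedGraph V) (x : V) : Set V :=
  G.pa x ∪ G.district x ∪ (⋃ y ∈ G.district x, G.pa y) ∪ G.nbr x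

noncomputable def deltaPlus [Fintype V] (G : MixedGraph V) : ℕ :=
  Finset.univ.sup fun z : V => (G.paPlus z).ncard

/-- Condition 1 of the graphical characterization of removability. -/
def RemCond1 (G : MixedGraph V) (X : V) : Prop :=
  ∀ Y Z : V, G.adj X Y → Z ∈ G.child X ∪ G.nbr X → Z ≠ Y → G.adj Y Z

/-- Condition 2 of the graphical characterization of removability. -/
def RemCond2 (G : MixedGraph V) (X : V) : Prop :=
  ∀ (p : List V) (Y Z : V), G.IsColliderPath p → p.head? = some X →
    p.getLast? = some Y → Z ∉ p → (∀ v ∈ p.dropLast, G.dir v Z) → G.adj Y Z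

end MixedGraph


namespace MixedGraph
variable {V : Type*}

lemma adj_symm' (G : MixedGraph V) {x y : V} (h : G.adj x y) : G.adj y x := by
  rcases h with h | h | h | h
  · exact Or.inr (Or.inl h)
  · exact Or.inl h
  · exact Or.inr (Or.inr (Or.inl (G.bi_symm _ _ h)))
  · exact Or.inr (Or.inr (Or.inr (G.und_symm _ _ h)))

lemma induce_adj_mem' {S : Set V} {G : MixedGraph V} {x y : V}
    (h : (G.induce S).adj x y) : G.adj x y ∧ x ∈ S ∧ y ∈ S := by
  rcases h with ⟨h, hx, hy⟩ | ⟨h, hy, hx⟩ | ⟨h, hx, hy⟩ | ⟨h, hx, hy⟩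
  · exact ⟨Or.inl h, hx, hy⟩
  · exact ⟨Or.inr (Or.inl h), hx, hy⟩
  · exact ⟨Or.inr (Or.inr (Or.inl h)), hx, hy⟩
  · exact ⟨Or.inr (Or.inr (Or.inr h)), hx, hy⟩

lemma induce_head_iff' {S : Set V} {G : MixedGraph V} {x y : V}
    (hx : x ∈ S) (hy : y ∈ S) : (G.induce S).head x y ↔ G.head x y := by
  constructor
  · rintro (⟨h, _, _⟩ | ⟨h, _, _⟩)
    exacts [Or.inl h, Or.inr h]
  · rintro (h | h)
    exacts [Or.inl ⟨h, hx, hy⟩, Or.inr ⟨h, hx, hy⟩]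

lemma induce_head_le' {S : Set V} {G : MixedGraph V} {x y : V}
    (h : (G.induce S).head x y) : G.head x y := by
  rcases h with ⟨h, _, _⟩ | ⟨h, _, _⟩
  exacts [Or.inl h, Or.inr h]

lemma chain'_getElem' {R : V → V → Prop} {l : List V} (h : l.Chain' R) {i : ℕ}
    (hi : i + 1 < l.length) : R (l[i]'(by omega)) (l[i+1]'hi) := by
  have := List.isChain_iff_getElem.mp h i (by omega)
  simpa [List.get_eq_getElem] using this

end MixedGraph

open MixedGraph in
/-- In a MAG, if `X` is removable, then for every collider path
`(X, V₁, …, V_m, Y)` and every `Z` not on the path with `X, V₁, …, V_m` all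
parents of `Z`, the vertices `Y` and `Z` are adjacent. -/
theorem stmt1 {V : Type*} (G : MixedGraph V) (hG : G.IsMAG) (X : V)
    (hrem : G.Removable X) :
    ∀ (p : List V) (Y Z : V), G.IsColliderPath p → p.head? = some X →
      p.getLast? = some Y → Z ∉ p → (∀ v ∈ p.dropLast, G.dir v Z) →
      G.adj Y Z := by
  intro p Y Z hcp hhead hlast hZp hdir
  by_contra hadjYZ
  obtain ⟨⟨hchain, hnodup, hlen⟩, hcol⟩ := hcp
  have hX0' : p[0]? = some X := by rw [← List.head?_eq_getElem?]; exact hhead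
  obtain ⟨h0lt, hX0⟩ := List.getElem?_eq_some_iff.mp hX0'
  have hYn' : p[p.length - 1]? = some Y := by
    rw [← List.getLast?_eq_getElem?]; exact hlast
  obtain ⟨hnlt, hYn⟩ := List.getElem?_eq_some_iff.mp hYn'
  have hYX : Y ≠ X := by
    intro h
    have h2 : p[p.length - 1] = p[0] := by rw [hYn, hX0, h]
    have := (hnodup.getElem_inj_iff).mp h2
    omega
  have hXp : X ∈ p := hX0 ▸ List.getElem_mem h0lt
  have hYp : Y ∈ p := hYn ▸ List.getElem_mem hnlt
  have hZX : Z ≠ X := fun h => hZp (h ▸ hXp)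
  have hYZ : Y ≠ Z := fun h => hZp (h ▸ hYp)
  have hdirj : ∀ j v, j < p.length - 1 → p[j]? = some v → G.dir v Z := by
    intro j v hj hv
    obtain ⟨hjl, rfl⟩ := List.getElem?_eq_some_iff.mp hv
    have hj' : j < p.dropLast.length := by rw [List.length_dropLast]; omega
    have := hdir (p.dropLast[j]'hj') (List.getElem_mem hj')
    rwa [List.getElem_dropLast] at this
  have hXZ : G.dir X Z := hdirj 0 X (by omega) hX0'
  obtain ⟨S₀, hS₀sub, hS₀sep⟩ := hG.2 Y Z hYZ hadjYZ
  set S : Set V := S₀ \ {X} with hSdef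
  have hSsub : S ⊆ {v | v ≠ X ∧ v ≠ Y ∧ v ≠ Z} := by
    intro v hv
    have h1 := hS₀sub hv.1
    exact ⟨fun h => hv.2 h, h1.1, h1.2⟩
  have hindSep : (G.induce {v | v ≠ X}).MSep Y Z S := by
    intro q hq
    apply hS₀sep q
    obtain ⟨⟨⟨hqc, hqn, hql⟩, hqh, hqt⟩, hqi⟩ := hq
    have hqadj : ∀ i (hi : i + 1 < q.length),
        (G.induce {v | v ≠ X}).adj (q[i]'(by omega)) (q[i+1]'hi) :=
      fun i hi => chain'_getElem' hqc hi
    have hqX : ∀ i v, i < q.length → q[i]? = some v → v ∈ ({v | v ≠ X} : Set V) := by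
      intro i v hi hv
      obtain ⟨hil, rfl⟩ := List.getElem?_eq_some_iff.mp hv
      by_cases hcs : i + 1 < q.length
      · exact (induce_adj_mem' (hqadj i hcs)).2.1
      · have hi1 : (i - 1) + 1 < q.length := by omega
        have hmem := (induce_adj_mem' (hqadj (i-1) hi1)).2.2
        have he : i - 1 + 1 = i := by omega
        simp only [he] at hmem
        exact hmem
    refine ⟨⟨⟨?_, hqn, hql⟩, hqh, hqt⟩, ?_⟩
    · exact List.IsChain.imp (fun a b h => (induce_adj_mem' h).1) hqc
    · intro i v h1 h2 hv
      have hvX : v ≠ X := hqX i v (by omega) hv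
      have hcEquiv : G.ColliderAt q i ↔ (G.induce {v | v ≠ X}).ColliderAt q i := by
        constructor
        · rintro ⟨a, u, c, ha, hu, hc, hh1, hh2⟩
          refine ⟨a, u, c, ha, hu, hc, ?_, ?_⟩
          · exact (induce_head_iff' (hqX (i-1) a (by omega) ha)
              (hqX i u (by omega) hu)).mpr hh1
          · exact (induce_head_iff' (hqX (i+1) c (by omega) hc)
              (hqX i u (by omega) hu)).mpr hh2
        · rintro ⟨a, u, c, ha, hu, hc, hh1, hh2⟩
          exact ⟨a, u, c, ha, hu, hc, induce_head_le' hh1, induce_head_le' hh2⟩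
      obtain ⟨hc1, hc2⟩ := hqi i v h1 h2 hv
      constructor
      · intro hcol'
        obtain ⟨w, hw, hanc⟩ := hc1 (hcEquiv.mp hcol')
        refine ⟨w, ?_, Relation.ReflTransGen.mono (r := (G.induce {v | v ≠ X}).dir) (p := G.dir) (fun a b h => h.1) v w hanc⟩
        rcases hw with h | h
        · exact Or.inl h
        · exact Or.inr h.1
      · intro hncol hvS₀
        exact hc2 (fun h => hncol (hcEquiv.mpr h)) ⟨hvS₀, hvX⟩
  have hsepG : G.MSep Y Z S := (hrem Y Z hYX hZX hYZ S hSsub).mpr hindSep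
  set p' : List V := p.reverse ++ [Z] with hp'
  have hp'len : p'.length = p.length + 1 := by simp [hp']
  have hidx : ∀ i, i < p.length → p'[i]? = p[p.length - 1 - i]? := by
    intro i hi
    rw [hp', List.getElem?_append_left (by simpa using hi),
      List.getElem?_reverse (by simpa using hi)]
  have hlastidx : p'[p.length]? = some Z := by
    have := List.getElem?_concat_length (l := p.reverse) (a := Z)
    rwa [List.length_reverse] at this
  apply hsepG p'
  refine ⟨⟨⟨?_, ?_, ?_⟩, ?_, ?_⟩, ?_⟩
  · rw [hp']; show List.IsChain G.adj _; rw [List.isChain_append]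
    refine ⟨List.isChain_reverse.mpr (List.IsChain.imp (fun a b h => G.adj_symm' h) hchain),
      List.isChain_singleton _, ?_⟩
    intro x hx y hy
    rw [List.getLast?_reverse, hhead] at hx
    simp only [List.head?_cons, Option.mem_def, Option.some_inj] at hx hy
    rw [← hx, ← hy]
    exact Or.inl hXZ
  · rw [hp', List.nodup_append]
    refine ⟨List.nodup_reverse.mpr hnodup, List.nodup_singleton _, ?_⟩
    intro a ha b hb hab
    simp only [List.mem_singleton] at hb
    subst hb
    exact hZp (hab ▸ List.mem_reverse.mp ha)
  · rw [hp'len]; omega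
  · rw [List.head?_eq_getElem?, hidx 0 (by omega)]
    simpa using hYn'
  · rw [hp', List.getLast?_concat]
  · intro i v h1 h2 hv
    rw [hp'len] at h2
    have hilt : i < p.length := by omega
    rw [hidx i hilt] at hv
    by_cases hcase : i = p.length - 1
    · have hvX : v = X := by
        rw [hcase] at hv
        have h0 : p.length - 1 - (p.length - 1) = 0 := by omega
        rw [h0, hX0'] at hv
        exact (Option.some_inj.mp hv).symm
      constructor
      · intro hcol'
        exfalso
        obtain ⟨a, u, c, ha, hu, hc, hh1, hh2⟩ := hcol'
        have hi1 : i + 1 = p.length := by omega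
        rw [hi1, hlastidx] at hc
        have hcZ : c = Z := (Option.some_inj.mp hc).symm
        have huX : u = X := by
          rw [hidx i hilt, hcase] at hu
          have h0 : p.length - 1 - (p.length - 1) = 0 := by omega
          rw [h0, hX0'] at hu
          exact (Option.some_inj.mp hu).symm
        rw [hcZ, huX] at hh2
        rcases hh2 with hd | hb
        · exact hG.1.1 X Z hXZ (Relation.ReflTransGen.single hd)
        · exact hG.1.2.1 Z X hb (Relation.ReflTransGen.single hXZ)
      · intro _ hvS
        exact hvS.2 hvX
    · have hjge : 1 ≤ p.length - 1 - i := by omega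
      have hjlt : (p.length - 1 - i) + 1 < p.length := by omega
      obtain ⟨a, u, c, ha, hu, hc, hh1, hh2⟩ := hcol (p.length - 1 - i) hjge hjlt
      have huv : u = v := by rw [hu] at hv; exact Option.some_inj.mp hv
      rw [huv] at hh1 hh2 hu
      have hcol' : G.ColliderAt p' i := by
        refine ⟨c, v, a, ?_, ?_, ?_, hh2, hh1⟩
        · rw [hidx (i-1) (by omega)]
          have he : p.length - 1 - (i - 1) = (p.length - 1 - i) + 1 := by omega
          rw [he]; exact hc
        · rw [hidx i hilt]; exact hu
        · rw [hidx (i+1) (by omega)]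
          have he : p.length - 1 - (i + 1) = (p.length - 1 - i) - 1 := by omega
          rw [he]; exact ha
      constructor
      · intro _
        exact ⟨Z, by simp, Relation.ReflTransGen.single (hdirj _ v (by omega) hu)⟩
      · intro hnc
        exact absurd hcol' hnc
end

section
/- Let M be a MAG over vertices V, and let X ∈ V be such that whenever Y ∈ Pa(X) and Z ∈ Ch(X), also Y ∈ Pa(Z). Let H be the induced subgraph of M over V\{X}. Then for every Y ∈ V\{X}, the descendants of Y in M, excluding X, coincide exactly with the descendants of Y in H. -/
open MixedGraph in
/-- in a MAG `M`, if every parent of `X` is a parent of every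
child of `X`, then descendants in the induced subgraph on `V \ {X}` are
exactly the descendants in `M` other than `X`. -/
theorem stmt3 {V : Type*} (M : MixedGraph V) (hM : M.IsMAG) (X : V)
    (hpar : ∀ Y Z : V, Y ∈ M.pa X → Z ∈ M.child X → Y ∈ M.pa Z) :
    ∀ Y : V, Y ≠ X →
      M.desc Y \ {X} = (M.induce {v | v ≠ X}).desc Y := by
  intro Y hY
  ext Z
  simp only [Set.mem_diff, Set.mem_singleton_iff, desc, anc, Set.mem_setOf_eq]
  constructor
  · rintro ⟨hanc, hZ⟩
    have key : ∀ a, Relation.ReflTransGen M.dir a Z →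
        ((a ≠ X → Relation.ReflTransGen (M.induce {v | v ≠ X}).dir a Z) ∧
         (a = X → ∀ W, M.dir W X → W ≠ X →
            Relation.ReflTransGen (M.induce {v | v ≠ X}).dir W Z)) := by
      intro a h
      induction h using Relation.ReflTransGen.head_induction_on with
      | refl => exact ⟨fun _ => Relation.ReflTransGen.refl,
          fun hx => absurd hx hZ⟩
      | head hac hcZ ih =>
        rename_i a c
        constructor
        · intro haX
          by_cases hcX : c = X
          · exact ih.2 hcX a (hcX ▸ hac) haX
          · exact Relation.ReflTransGen.head ⟨hac, haX, hcX⟩ (ih.1 hcX)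
        · intro haX W hWX hWneX
          rw [haX] at hac
          by_cases hcX : c = X
          · exact absurd Relation.ReflTransGen.refl (hM.1.1 X X (hcX ▸ hac))
          · have hWc : M.dir W c := hpar W c hWX hac
            exact Relation.ReflTransGen.head ⟨hWc, hWneX, hcX⟩ (ih.1 hcX)
    exact (key Y hanc).1 hY
  · intro h
    have key : ∀ a b, Relation.ReflTransGen (M.induce {v | v ≠ X}).dir a b →
        Relation.ReflTransGen M.dir a b ∧ (a ≠ X → b ≠ X) := by
      intro a b hab
      induction hab with
      | refl => exact ⟨Relation.ReflTransGen.refl, fun h => h⟩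
      | tail hbc hcd ih =>
        exact ⟨ih.1.tail hcd.1, fun _ => hcd.2.2⟩
    exact ⟨(key Y Z h).1, (key Y Z h).2 hY⟩
end

section
/- Let X and Y be two non-adjacent vertices in a MAG M such that X is not an ancestor of Y. Define W = N(X) ∪ (Pa⁺(X) ∩ Anc({X,Y})), where Pa⁺(X) = Pa(X) ∪ Dis(X) ∪ Pa(Dis(X)) ∪ N(X). Then the set W \ {X,Y} m-separates X and Y in M. -/
open MixedGraph in
/-- if `X` and `Y` are non-adjacent in a MAG and `X` is not an
ancestor of `Y`, then `(N(X) ∪ (Pa⁺(X) ∩ Anc({X,Y}))) \ {X,Y}` m-separates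
`X` and `Y`. -/
theorem stmt4 {V : Type*} (M : MixedGraph V) (hM : M.IsMAG) (X Y : V)
    (hne : X ≠ Y) (hnadj : ¬ M.adj X Y) (hnanc : ¬ M.anc X Y) :
    M.MSep X Y ((M.nbr X ∪ (M.paPlus X ∩ M.ancSet {X, Y})) \ {X, Y}) := by
  classical
  obtain ⟨⟨hdir, hbi, hund⟩, hmax⟩ := hM
  intro p hconn
  obtain ⟨⟨⟨hchain, hnodup, hlen⟩, hhead, hlast⟩, hcond⟩ := hconn
  set n := p.length with hn
  set f : ℕ → V := fun i => p.getD i X with hfdef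
  have hfe : ∀ (i : ℕ) (h : i < p.length), f i = p[i] := fun i h =>
    List.getD_eq_getElem p X h
  have hfq : ∀ (i : ℕ), i < n → p[i]? = some (f i) := by
    intro i h
    rw [List.getElem?_eq_getElem (by omega : i < p.length)]
    rw [hfe i (by omega)]
  have hf0 : f 0 = X := by
    have h := hhead
    rw [List.head?_eq_getElem?, hfq 0 (by omega)] at h
    exact Option.some.inj h
  have hfl : f (n - 1) = Y := by
    have h := hlast
    rw [List.getLast?_eq_getElem?, ← hn, hfq (n - 1) (by omega)] at h
    exact Option.some.inj h
  have hadj : ∀ i, i + 1 < n → M.adj (f i) (f (i + 1)) := by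
    intro i h
    have h' : i < p.length - 1 := by omega
    have hch := List.isChain_iff_getElem.mp hchain i (by omega)
    simp only [← hfe] at hch
    exact hch
  have hinj : ∀ i j, i < n → j < n → f i = f j → i = j := by
    intro i j hi hj h
    have h2 : p.get ⟨i, by omega⟩ = p.get ⟨j, by omega⟩ := by
      simp only [List.get_eq_getElem]
      simp only [← hfe]
      exact h
    have h3 := List.nodup_iff_injective_get.mp hnodup h2
    simpa using h3
  have hneX : ∀ i, 1 ≤ i → i < n → f i ≠ X := by
    intro i h1 h2 h
    have := hinj i 0 h2 (by omega) (by rw [h, hf0])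
    omega
  have hneY : ∀ i, i + 1 < n → f i ≠ Y := by
    intro i h2 h
    have := hinj i (n - 1) (by omega) (by omega) (by rw [h, hfl])
    omega
  have hcol : ∀ i, 1 ≤ i → i + 1 < n →
      (M.ColliderAt p i ↔ (M.head (f (i - 1)) (f i) ∧ M.head (f (i + 1)) (f i))) := by
    intro i h1 h2
    constructor
    · rintro ⟨a, v, c, ha, hv, hc, hav, hcv⟩
      rw [hfq (i - 1) (by omega)] at ha
      rw [hfq i (by omega)] at hv
      rw [hfq (i + 1) (by omega)] at hc
      obtain rfl := Option.some.inj ha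
      obtain rfl := Option.some.inj hv
      obtain rfl := Option.some.inj hc
      exact ⟨hav, hcv⟩
    · rintro ⟨hl, hr⟩
      exact ⟨f (i - 1), f i, f (i + 1), hfq _ (by omega), hfq _ (by omega),
        hfq _ (by omega), hl, hr⟩
  have hhbi : ∀ a b : V, M.head a b → M.head b a → M.bi a b := by
    intro a b h1 h2
    rcases h1 with h1 | h1
    · rcases h2 with h2 | h2
      · exact absurd (Relation.ReflTransGen.single h2) (hdir a b h1)
      · exact absurd (Relation.ReflTransGen.single h1) (hbi b a h2)
    · exact h1
  have hZmem : ∀ i, 1 ≤ i → i + 1 < n →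
      f i ∈ M.nbr X ∪ (M.paPlus X ∩ M.ancSet {X, Y}) →
      f i ∈ (M.nbr X ∪ (M.paPlus X ∩ M.ancSet {X, Y})) \ ({X, Y} : Set V) := by
    intro i h1 h2 h
    refine ⟨h, fun hmem => ?_⟩
    simp only [Set.mem_insert_iff, Set.mem_singleton_iff] at hmem
    rcases hmem with h' | h'
    · exact hneX i h1 (by omega) h'
    · exact hneY i h2 h'
  have hnotinZ : ∀ i, 1 ≤ i → i + 1 < n → ¬ M.ColliderAt p i →
      f i ∉ (M.nbr X ∪ (M.paPlus X ∩ M.ancSet {X, Y})) \ ({X, Y} : Set V) := by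
    intro i h1 h2 hnc
    exact (hcond i (f i) h1 h2 (hfq i (by omega))).2 hnc
  have L1 : ∀ i, 1 ≤ i → i + 1 < n → M.ColliderAt p i → f i ∈ M.ancSet {X, Y} := by
    intro i h1 h2 hci
    obtain ⟨t, ht, hat⟩ := (hcond i (f i) h1 h2 (hfq i (by omega))).1 hci
    rw [Set.mem_union] at ht
    rcases ht with ht | ht
    · exact ⟨t, ht, hat⟩
    · obtain ⟨htW, htXY⟩ := ht
      rw [Set.mem_union] at htW
      rcases htW with htn | ⟨_, u, hu, hau⟩
      · exfalso
        have hnopar := hund t X (M.und_symm _ _ htn)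
        rcases hat.cases_tail with heq | ⟨c, _, hcs⟩
        · subst heq
          obtain ⟨hhl, _⟩ := (hcol i h1 h2).mp hci
          rcases hhl with h' | h'
          · exact (hnopar (f (i - 1))).1 h'
          · exact (hnopar (f (i - 1))).2 h'
        · exact (hnopar c).1 hcs
      · exact ⟨u, hu, hat.trans hau⟩
  have L2 : ∀ m j, n - j ≤ m → 1 ≤ j → j + 1 < n → M.head (f (j - 1)) (f j) →
      ¬ M.ColliderAt p j → f j ∈ M.ancSet {X, Y} := by
    intro m
    induction m with
    | zero => intro j hm h1 h2 _ _; omega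
    | succ m ih =>
      intro j hm h1 h2 hh hnc
      have hdj : M.dir (f j) (f (j + 1)) := by
        rcases hadj j h2 with h | h | h | h
        · exact h
        · exact absurd ((hcol j h1 h2).mpr ⟨hh, Or.inl h⟩) hnc
        · exact absurd ((hcol j h1 h2).mpr ⟨hh, Or.inr (M.bi_symm _ _ h)⟩) hnc
        · exfalso
          rcases hh with h' | h'
          · exact (hund _ _ h (f (j - 1))).1 h'
          · exact (hund _ _ h (f (j - 1))).2 h'
      rcases eq_or_lt_of_le (show j + 2 ≤ n by omega) with hend | hend
      · have hfy : f (j + 1) = Y := by rw [show j + 1 = n - 1 by omega, hfl]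
        exact ⟨Y, Set.mem_insert_of_mem _ rfl, hfy ▸ Relation.ReflTransGen.single hdj⟩
      · by_cases hc : M.ColliderAt p (j + 1)
        · obtain ⟨t, ht, hat⟩ := L1 (j + 1) (by omega) (by omega) hc
          exact ⟨t, ht, Relation.ReflTransGen.head hdj hat⟩
        · have hh' : M.head (f (j + 1 - 1)) (f (j + 1)) := by
            rw [Nat.add_sub_cancel]; exact Or.inl hdj
          obtain ⟨t, ht, hat⟩ := ih (j + 1) (by omega) (by omega) (by omega) hh' hc
          exact ⟨t, ht, Relation.ReflTransGen.head hdj hat⟩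
  by_cases hall : ∀ i, 1 ≤ i → i + 1 < n → M.ColliderAt p i
  · obtain ⟨Z0, _, hsep⟩ := hmax X Y hne hnadj
    refine hsep p ⟨⟨⟨hchain, hnodup, hlen⟩, hhead, hlast⟩, ?_⟩
    intro i v h1 h2 hv
    have hv' : f i = v := by
      rw [hfq i (by omega)] at hv
      exact Option.some.inj hv
    subst hv'
    refine ⟨fun hc => ?_, fun hnc => absurd (hall i h1 h2) hnc⟩
    obtain ⟨t, ht, hat⟩ := L1 i h1 h2 hc
    exact ⟨t, Set.mem_union_left _ ht, hat⟩
  · push_neg at hall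
    have hex : ∃ i, 1 ≤ i ∧ i + 1 < n ∧ ¬ M.ColliderAt p i := hall
    set s := Nat.find hex with hsdef
    obtain ⟨hs1, hs2, hsnc⟩ := Nat.find_spec hex
    have hcolj : ∀ j, 1 ≤ j → j < s → M.ColliderAt p j := by
      intro j h1 h2
      by_contra hc
      rw [hsdef] at h2
      exact Nat.find_min hex h2 ⟨h1, by omega, hc⟩
    rcases eq_or_lt_of_le hs1 with hseq | hslt
    · rw [← hseq] at hs2 hsnc
      have hadj01 : M.adj X (f 1) := by
        have := hadj 0 (by omega)
        rwa [hf0] at this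
      rcases hadj01 with hc | hb | hbb | hu
      · have hhd : M.head (f (1 - 1)) (f 1) := by
          rw [show (1:ℕ) - 1 = 0 from rfl, hf0]; exact Or.inl hc
        obtain ⟨t, ht, hat⟩ := L2 n 1 (by omega) le_rfl hs2 hhd hsnc
        simp only [Set.mem_insert_iff, Set.mem_singleton_iff] at ht
        rcases ht with h' | h'
        · rw [h'] at hat
          exact hdir X (f 1) hc hat
        · rw [h'] at hat
          exact hnanc (Relation.ReflTransGen.head hc hat)
      · refine hnotinZ 1 le_rfl hs2 hsnc (hZmem 1 le_rfl hs2 ?_)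
        exact Set.mem_union_right _ (Set.mem_inter
          (Set.mem_union_left _ (Set.mem_union_left _ (Set.mem_union_left _ hb)))
          ⟨X, Set.mem_insert _ _, Relation.ReflTransGen.single hb⟩)
      · have hhd : M.head (f (1 - 1)) (f 1) := by
          rw [show (1:ℕ) - 1 = 0 from rfl, hf0]; exact Or.inr hbb
        have hanc1 := L2 n 1 (by omega) le_rfl hs2 hhd hsnc
        refine hnotinZ 1 le_rfl hs2 hsnc (hZmem 1 le_rfl hs2 ?_)
        exact Set.mem_union_right _ (Set.mem_inter
          (Set.mem_union_left _ (Set.mem_union_left _ (Set.mem_union_right _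
            (Relation.ReflTransGen.single hbb))))
          hanc1)
      · exact hnotinZ 1 le_rfl hs2 hsnc (hZmem 1 le_rfl hs2 (Set.mem_union_left _ hu))
    · -- s ≥ 2
      have hbnd1 : 1 + 1 < n := by omega
      have hC1 : M.ColliderAt p 1 := hcolj 1 le_rfl hslt
      obtain ⟨hh1, _⟩ := (hcol 1 le_rfl hbnd1).mp hC1
      have hh1' : M.head X (f 1) := by
        rw [show (1:ℕ) - 1 = 0 from rfl, hf0] at hh1
        exact hh1
      have hbiX1 : M.bi X (f 1) := by
        rcases hh1' with hd1 | hb1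
        · exfalso
          obtain ⟨t, ht, hat⟩ := L1 1 le_rfl hbnd1 hC1
          simp only [Set.mem_insert_iff, Set.mem_singleton_iff] at ht
          rcases ht with h' | h'
          · rw [h'] at hat
            exact hdir X (f 1) hd1 hat
          · rw [h'] at hat
            exact hnanc (Relation.ReflTransGen.head hd1 hat)
        · exact hb1
      have hdis : ∀ i, 1 ≤ i → i < s → Relation.ReflTransGen M.bi X (f i) := by
        intro i h1
        induction i, h1 using Nat.le_induction with
        | base => intro _; exact Relation.ReflTransGen.single hbiX1
        | succ i hi ih =>
          intro his
          have hXi := ih (by omega)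
          have hCi := hcolj i hi (by omega)
          have hCi1 := hcolj (i + 1) (by omega) his
          have hb1 : i + 1 < n := by omega
          have hb2 : i + 1 + 1 < n := by omega
          obtain ⟨_, hr⟩ := (hcol i hi hb1).mp hCi
          obtain ⟨hl, _⟩ := (hcol (i + 1) (by omega) hb2).mp hCi1
          rw [Nat.add_sub_cancel] at hl
          exact hXi.tail (hhbi _ _ hl hr)
      have hbnds : s - 1 + 1 < n := by omega
      have hCs1 : M.ColliderAt p (s - 1) := hcolj (s - 1) (by omega) (by omega)
      obtain ⟨_, hhr⟩ := (hcol (s - 1) (by omega) hbnds).mp hCs1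
      rw [show s - 1 + 1 = s by omega] at hhr
      have hdis1 : Relation.ReflTransGen M.bi X (f (s - 1)) := hdis (s - 1) (by omega) (by omega)
      have hanc1 : f (s - 1) ∈ M.ancSet {X, Y} := L1 (s - 1) (by omega) hbnds hCs1
      rcases hhr with hdr | hbr
      · have hpp : f s ∈ M.paPlus X :=
          Set.mem_union_left _ (Set.mem_union_right _ (Set.mem_biUnion hdis1 hdr))
        obtain ⟨t, ht, hat⟩ := hanc1
        have hancs : f s ∈ M.ancSet {X, Y} := ⟨t, ht, Relation.ReflTransGen.head hdr hat⟩
        exact hnotinZ s hs1 hs2 hsnc (hZmem s hs1 hs2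
          (Set.mem_union_right _ (Set.mem_inter hpp hancs)))
      · have hdiss : Relation.ReflTransGen M.bi X (f s) := hdis1.tail (M.bi_symm _ _ hbr)
        have hhl : M.head (f (s - 1)) (f s) := Or.inr (M.bi_symm _ _ hbr)
        have hancs := L2 n s (by omega) hs1 hs2 hhl hsnc
        exact hnotinZ s hs1 hs2 hsnc (hZmem s hs1 hs2
          (Set.mem_union_right _ (Set.mem_inter
            (Set.mem_union_left _ (Set.mem_union_left _ (Set.mem_union_right _ hdiss)))
            hancs)))
end

section
/- Let G be a MAG over V with a removable vertex X, and let H be the induced subgraph of G over V\{X}. For any path u lying entirely in H and any set W ⊆ V\{X}, the path u is m-connecting relative to W in G if and only if u is m-connecting relative to W in H. -/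
namespace MixedGraph

variable {V : Type*}

lemma mem_of_getElem' {α : Type*} {l : List α} {i : ℕ} {a : α}
    (h : l[i]? = some a) : a ∈ l := by
  obtain ⟨hlt, rfl⟩ := List.getElem?_eq_some_iff.1 h
  exact List.getElem_mem hlt

lemma adj_induce_iff (G : MixedGraph V) (S : Set V) (a b : V) :
    (G.induce S).adj a b ↔ G.adj a b ∧ a ∈ S ∧ b ∈ S := by
  simp only [adj, induce]
  tauto

lemma head_induce_iff (G : MixedGraph V) (S : Set V) (a b : V) :
    (G.induce S).head a b ↔ G.head a b ∧ a ∈ S ∧ b ∈ S := by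
  simp only [head, induce]
  tauto

lemma mem_S_of_chain' (G : MixedGraph V) (S : Set V) :
    ∀ {l : List V}, l.Chain' (G.induce S).adj → 2 ≤ l.length → ∀ v ∈ l, v ∈ S
  | [], _, hl => by simp at hl
  | [a], _, hl => by simp at hl
  | a :: b :: t, h, _ => by
    simp only [List.Chain', List.isChain_cons_cons] at h
    obtain ⟨hab, ht⟩ := h
    have hadj := (G.adj_induce_iff S a b).1 hab
    intro v hv
    rcases List.mem_cons.1 hv with rfl | hv
    · exact hadj.2.1
    · cases t with
      | nil =>
        simp only [List.mem_singleton] at hv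
        subst hv; exact hadj.2.2
      | cons c t' =>
        exact mem_S_of_chain' G S ht (by simp) v hv

lemma colliderAt_induce_iff (G : MixedGraph V) (S : Set V) {q : List V}
    (hmem : ∀ v ∈ q, v ∈ S) (i : ℕ) :
    (G.induce S).ColliderAt q i ↔ G.ColliderAt q i := by
  constructor
  · rintro ⟨a, v, c, ha, hv, hc, h1, h2⟩
    exact ⟨a, v, c, ha, hv, hc, ((G.head_induce_iff S a v).1 h1).1,
      ((G.head_induce_iff S c v).1 h2).1⟩
  · rintro ⟨a, v, c, ha, hv, hc, h1, h2⟩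
    have hma := hmem a (mem_of_getElem' ha)
    have hmv := hmem v (mem_of_getElem' hv)
    have hmc := hmem c (mem_of_getElem' hc)
    exact ⟨a, v, c, ha, hv, hc, (G.head_induce_iff S a v).2 ⟨h1, hma, hmv⟩,
      (G.head_induce_iff S c v).2 ⟨h2, hmc, hmv⟩⟩

lemma anc_induce_aux (G : MixedGraph V) (X : V)
    (hkey : ∀ a b, G.dir a X → G.dir X b → G.dir a b)
    (hXX : ∀ c, G.dir X c → c ≠ X) {w : V} (hw : w ≠ X) :
    ∀ {v}, G.anc v w →
      (v ≠ X → (G.induce {t | t ≠ X}).anc v w) ∧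
      (v = X → ∀ a, a ≠ X → G.dir a X → (G.induce {t | t ≠ X}).anc a w) := by
  intro v h
  induction h using Relation.ReflTransGen.head_induction_on with
  | refl => exact ⟨fun _ => Relation.ReflTransGen.refl, fun h => absurd h hw⟩
  | head hvc hcw ih =>
    rename_i v' c'
    refine ⟨?_, ?_⟩
    · intro hvX
      by_cases hcX : c' = X
      · subst hcX
        exact ih.2 rfl v' hvX hvc
      · exact Relation.ReflTransGen.head ⟨hvc, hvX, hcX⟩ (ih.1 hcX)
    · intro hvX' a haX haX'
      have hvc' : G.dir X c' := hvX' ▸ hvc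
      have hcX : c' ≠ X := hXX c' hvc'
      have hac : G.dir a c' := hkey a c' haX' hvc'
      exact Relation.ReflTransGen.head ⟨hac, haX, hcX⟩ (ih.1 hcX)

/-- Key consequence of removability: shortcut edges over `X`. -/
lemma dir_of_pa_ch (G : MixedGraph V) (hG : G.IsMAG) (X : V)
    (hrem : G.Removable X) {Y Z : V} (hYX : G.dir Y X) (hXZ : G.dir X Z) :
    G.dir Y Z := by
  obtain ⟨⟨hdir, hbi, hund⟩, hmax⟩ := hG
  have hancXZ : G.anc X Z := Relation.ReflTransGen.single hXZ
  have hancYZ : G.anc Y Z := Relation.ReflTransGen.head hYX hancXZ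
  have hYne : Y ≠ X := fun h => hdir X X (h ▸ hYX) Relation.ReflTransGen.refl
  have hZne : Z ≠ X := fun h => hdir X X (h ▸ hXZ) Relation.ReflTransGen.refl
  have hYZ : Y ≠ Z := fun h =>
    hdir X Z hXZ (Relation.ReflTransGen.single (h ▸ hYX))
  have hadj : G.adj Y Z := by
    by_contra hnadj
    obtain ⟨S, hS, hsep⟩ := hmax Y Z hYZ hnadj
    have hsub : (S \ {X}) ⊆ {v | v ≠ X ∧ v ≠ Y ∧ v ≠ Z} := by
      intro v hv
      obtain ⟨hvS, hvX⟩ := hv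
      have h1 := hS hvS
      exact ⟨fun h => hvX (by simp [h]), h1.1, h1.2⟩
    have hnotsep : ¬ G.MSep Y Z (S \ {X}) := by
      intro hsep'
      refine hsep' [Y, X, Z] ⟨⟨⟨?_, ?_, ?_⟩, ?_, ?_⟩, ?_⟩
      · exact List.isChain_cons_cons.2 ⟨Or.inl hYX, List.isChain_cons_cons.2
          ⟨Or.inl hXZ, List.isChain_singleton Z⟩⟩
      · simp [hYne, hYZ, Ne.symm hZne]
      · simp
      · simp
      · simp
      · intro i v h1 h2 hv
        have hi : i = 1 := by simp at h2; omega
        subst hi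
        simp only [List.getElem?_cons_succ, List.getElem?_cons_zero,
          Option.some.injEq] at hv
        subst hv
        have hncol : ¬ G.ColliderAt [Y, X, Z] 1 := by
          rintro ⟨a, w, c, ha, hw, hc, hh1, hh2⟩
          have hw' : X = w := by simpa using hw
          have hc' : Z = c := by simpa using hc
          subst hw'; subst hc'
          rcases hh2 with h | h
          · exact hdir Z X h hancXZ
          · exact hbi Z X h hancXZ
        exact ⟨fun h => absurd h hncol, fun _ => by simp⟩
    have hnotsepH : ¬ (G.induce {v | v ≠ X}).MSep Y Z (S \ {X}) :=
      fun h => hnotsep ((hrem Y Z hYne hZne hYZ (S \ {X}) hsub).mpr h)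
    simp only [MSep, not_forall, not_not] at hnotsepH
    obtain ⟨q, hq⟩ := hnotsepH
    obtain ⟨⟨⟨hchain, hnodup, hlen⟩, hqhead, hqlast⟩, hint⟩ := hq
    have hmemne : ∀ v ∈ q, v ∈ ({t | t ≠ X} : Set V) :=
      G.mem_S_of_chain' _ hchain hlen
    refine hsep q ⟨⟨⟨?_, hnodup, hlen⟩, hqhead, hqlast⟩, ?_⟩
    · exact hchain.imp fun a b h => ((G.adj_induce_iff _ a b).1 h).1
    · intro i v h1 h2 hv
      have hiff := G.colliderAt_induce_iff {t | t ≠ X} hmemne i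
      obtain ⟨hc, hnc⟩ := hint i v h1 h2 hv
      constructor
      · intro hcol
        obtain ⟨t, ht, hanc⟩ := hc (hiff.2 hcol)
        refine ⟨t, ?_, Relation.ReflTransGen.mono (fun a b (h : (G.induce {v | v ≠ X}).dir a b) => h.1) _ _ hanc⟩
        rcases ht with ht | ht
        · exact Or.inl ht
        · exact Or.inr ht.1
      · intro hncol
        have hv' := hnc (fun h => hncol (hiff.1 h))
        intro hvS
        exact hv' ⟨hvS, by simpa using hmemne v (mem_of_getElem' hv)⟩
  rcases hadj with h | h | h | h
  · exact h
  · exact absurd hancYZ (hdir Z Y h)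
  · exact absurd hancYZ (hbi Z Y (G.bi_symm Y Z h))
  · exact absurd hXZ (hund Z Y (G.und_symm Y Z h) X).1

end MixedGraph

open MixedGraph in
/-- for a removable vertex `X` of a MAG `G` and a path `u` lying
in the induced subgraph `H` on `V \ {X}`, `u` is m-connecting relative to
`W ⊆ V \ {X}` in `G` iff it is m-connecting relative to `W` in `H`. -/
theorem stmt7 {V : Type*} (G : MixedGraph V) (hG : G.IsMAG) (X : V)
    (hrem : G.Removable X) (u : List V) (x y : V) (W : Set V)
    (hu : ∀ v ∈ u, v ≠ X) (hW : ∀ w ∈ W, w ≠ X) :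
    G.MConn u x y W ↔ (G.induce {v | v ≠ X}).MConn u x y W := by
  have hkey : ∀ a b, G.dir a X → G.dir X b → G.dir a b :=
    fun a b ha hb => G.dir_of_pa_ch hG X hrem ha hb
  have hdir := hG.1.1
  have hXX : ∀ c, G.dir X c → c ≠ X :=
    fun c hc h => hdir X X (h ▸ hc) Relation.ReflTransGen.refl
  have hiff := fun (hm : ∀ v ∈ u, v ∈ ({t | t ≠ X} : Set V)) i =>
    G.colliderAt_induce_iff {t | t ≠ X} hm i
  constructor
  · rintro ⟨⟨⟨hchain, hnodup, hlen⟩, hhead, hlast⟩, hint⟩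
    have hxne : x ≠ X := hu x (List.mem_of_mem_head? hhead)
    have hyne : y ≠ X := hu y (List.mem_of_mem_getLast? hlast)
    refine ⟨⟨⟨?_, hnodup, hlen⟩, hhead, hlast⟩, ?_⟩
    · simp only [List.Chain', List.isChain_iff_getElem] at hchain ⊢
      intro i hi
      refine (G.adj_induce_iff _ _ _).2 ⟨hchain i hi, ?_, ?_⟩
      · exact hu _ (List.getElem_mem _)
      · exact hu _ (List.getElem_mem _)
    · intro i v h1 h2 hv
      obtain ⟨hc, hnc⟩ := hint i v h1 h2 hv
      constructor
      · intro hcol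
        obtain ⟨t, ht, hanc⟩ := hc ((hiff hu i).1 hcol)
        have htne : t ≠ X := by
          rcases ht with ht | ht
          · rcases ht with rfl | rfl
            · exact hxne
            · exact hyne
          · exact hW t ht
        have hvne : v ≠ X := hu v (mem_of_getElem' hv)
        exact ⟨t, ht, (G.anc_induce_aux X hkey hXX htne hanc).1 hvne⟩
      · intro hncol
        exact hnc (fun h => hncol ((hiff hu i).2 h))
  · rintro ⟨⟨⟨hchain, hnodup, hlen⟩, hhead, hlast⟩, hint⟩
    refine ⟨⟨⟨?_, hnodup, hlen⟩, hhead, hlast⟩, ?_⟩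
    · exact hchain.imp fun a b h => ((G.adj_induce_iff _ a b).1 h).1
    · intro i v h1 h2 hv
      obtain ⟨hc, hnc⟩ := hint i v h1 h2 hv
      constructor
      · intro hcol
        obtain ⟨t, ht, hanc⟩ := hc ((hiff hu i).2 hcol)
        exact ⟨t, ht, Relation.ReflTransGen.mono (fun a b (h : (G.induce {v | v ≠ X}).dir a b) => h.1) _ _ hanc⟩
      · intro hncol
        exact hnc (fun h => hncol ((hiff hu i).1 h))
end

section
/- Let G be a MAG and u = (Y, …, V₀, V₁, X, V₂, …, Z) a path in G on which X is a non-collider and V₁ is adjacent to V₂. Let ũ = (Y, …, V₁, V₂, …, Z) be the path obtained by shortcutting X. If V₁ is a collider on exactly one of u and ũ (and a non-collider on the other), then both X and V₁ are parents of V₂. -/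
open MixedGraph in
/-- on a path `u = (Y, …, V₀, V₁, X, V₂, …, Z)` in a MAG on which
`X` is a non-collider and `V₁` is adjacent to `V₂`, if `V₁` is a collider on
exactly one of `u` and the shortcut path `ũ = (Y, …, V₀, V₁, V₂, …, Z)`, then
both `X` and `V₁` are parents of `V₂`. -/
theorem stmt8 {V : Type*} (G : MixedGraph V) (hG : G.IsMAG)
    (l₁ l₂ : List V) (Y V₀ V₁ X V₂ Z : V)
    (hu : G.IsPathBetween (l₁ ++ V₀ :: V₁ :: X :: V₂ :: l₂) Y Z)
    (hXnc : ¬ (G.head V₁ X ∧ G.head V₂ X))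
    (hadj : G.adj V₁ V₂)
    (hxor : Xor' (G.head V₀ V₁ ∧ G.head X V₁) (G.head V₀ V₁ ∧ G.head V₂ V₁)) :
    G.dir X V₂ ∧ G.dir V₁ V₂ := by
  obtain ⟨⟨hchain, -, -⟩, -, -⟩ := hu
  have hsuf : (V₀ :: V₁ :: X :: V₂ :: l₂).Chain' G.adj :=
    hchain.suffix ⟨l₁, rfl⟩
  have hV₁X : G.adj V₁ X := (List.isChain_cons_cons.mp hsuf.tail).1
  have hXV₂ : G.adj X V₂ := (List.isChain_cons_cons.mp hsuf.tail.tail).1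
  obtain ⟨hanc1, hanc2, hund⟩ := hG.1
  rcases hxor with ⟨⟨hA, hB⟩, hnot⟩ | ⟨⟨hA, hC⟩, hnot⟩
  · -- Case 1: head X V₁ and ¬ head V₂ V₁
    have hnC : ¬ G.head V₂ V₁ := fun h => hnot ⟨hA, h⟩
    -- establish dir V₁ V₂
    have hdV₁V₂ : G.dir V₁ V₂ := by
      rcases hadj with h | h | h | h
      · exact h
      · exact absurd (Or.inl h) hnC
      · exact absurd (Or.inr (G.bi_symm _ _ h)) hnC
      · rcases hB with hb | hb
        · exact absurd hb (hund _ _ h X).1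
        · exact absurd hb (hund _ _ h X).2
    refine ⟨?_, hdV₁V₂⟩
    -- now establish dir X V₂
    rcases hB with hb | hb
    · -- dir X V₁, so X is an ancestor of V₂
      have hXancV₂ : G.anc X V₂ :=
        Relation.ReflTransGen.head hb (Relation.ReflTransGen.single hdV₁V₂)
      rcases hXV₂ with h | h | h | h
      · exact h
      · exact absurd hXancV₂ (hanc1 _ _ h)
      · exact absurd hXancV₂ (hanc2 _ _ (G.bi_symm _ _ h))
      · exact absurd hdV₁V₂ (hund _ _ (G.und_symm _ _ h) V₁).1
    · -- bi X V₁ : then head V₁ X, so X non-collider forces ¬ head V₂ X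
      have hh : G.head V₁ X := Or.inr (G.bi_symm _ _ hb)
      have hn : ¬ G.head V₂ X := fun h => hXnc ⟨hh, h⟩
      rcases hXV₂ with h | h | h | h
      · exact h
      · exact absurd (Or.inl h) hn
      · exact absurd (Or.inr (G.bi_symm _ _ h)) hn
      · exact absurd hdV₁V₂ (hund _ _ (G.und_symm _ _ h) V₁).1
  · -- Case 2: head V₂ V₁ and ¬ head X V₁ : derive a contradiction
    have hnB : ¬ G.head X V₁ := fun h => hnot ⟨hA, h⟩
    -- edge V₁–X must be dir V₁ X
    have hdV₁X : G.dir V₁ X := by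
      rcases hV₁X with h | h | h | h
      · exact h
      · exact absurd (Or.inl h) hnB
      · exact absurd (Or.inr (G.bi_symm _ _ h)) hnB
      · rcases hC with hc | hc
        · exact absurd hc (hund _ _ h V₂).1
        · exact absurd hc (hund _ _ h V₂).2
    have hhV₁X : G.head V₁ X := Or.inl hdV₁X
    have hn : ¬ G.head V₂ X := fun h => hXnc ⟨hhV₁X, h⟩
    have hdXV₂ : G.dir X V₂ := by
      rcases hXV₂ with h | h | h | h
      · exact h
      · exact absurd (Or.inl h) hn
      · exact absurd (Or.inr (G.bi_symm _ _ h)) hn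
      · exact absurd hdV₁X (hund _ _ h V₁).1
    have hV₁ancV₂ : G.anc V₁ V₂ :=
      Relation.ReflTransGen.head hdV₁X (Relation.ReflTransGen.single hdXV₂)
    rcases hC with hc | hc
    · exact absurd hV₁ancV₂ (hanc1 _ _ hc)
    · exact absurd hV₁ancV₂ (hanc2 _ _ hc)
end

section
/- Let G be a MAG over V with removable vertex X. Then for any Y, Z ∈ V\{X} and any W ⊆ V\{X,Y,Z}: if W ∪ {X} m-separates Y and Z in G, then W already m-separates Y and Z in G. -/
open MixedGraph in
lemma induce_adj_elim {V : Type*} {G : MixedGraph V} {S : Set V} {x y : V}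
    (h : (G.induce S).adj x y) : G.adj x y ∧ x ∈ S ∧ y ∈ S := by
  rcases h with h | h | h | h
  · exact ⟨Or.inl h.1, h.2⟩
  · exact ⟨Or.inr (Or.inl h.1), h.2.2, h.2.1⟩
  · exact ⟨Or.inr (Or.inr (Or.inl h.1)), h.2⟩
  · exact ⟨Or.inr (Or.inr (Or.inr h.1)), h.2⟩

open MixedGraph in
lemma induce_head_iff {V : Type*} {G : MixedGraph V} {S : Set V} {x y : V} :
    (G.induce S).head x y ↔ G.head x y ∧ x ∈ S ∧ y ∈ S := by
  constructor
  · rintro (h | h)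
    · exact ⟨Or.inl h.1, h.2⟩
    · exact ⟨Or.inr h.1, h.2⟩
  · rintro ⟨h | h, hx, hy⟩
    · exact Or.inl ⟨h, hx, hy⟩
    · exact Or.inr ⟨h, hx, hy⟩

open MixedGraph in
/-- if `X` is removable in a MAG `G`, then for `Y, Z ≠ X` and
`W ⊆ V \ {X,Y,Z}`, if `W ∪ {X}` m-separates `Y` and `Z` then so does `W`. -/
theorem stmt10 {V : Type*} (G : MixedGraph V) (hG : G.IsMAG) (X : V)
    (hrem : G.Removable X) (Y Z : V) (W : Set V)
    (hY : Y ≠ X) (hZ : Z ≠ X) (hYZ : Y ≠ Z)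
    (hW : W ⊆ {v | v ≠ X ∧ v ≠ Y ∧ v ≠ Z})
    (hsep : G.MSep Y Z (insert X W)) :
    G.MSep Y Z W := by
  apply (hrem Y Z hY hZ hYZ W hW).mpr
  set S : Set V := {v | v ≠ X} with hS
  intro p hconn
  apply hsep p
  obtain ⟨⟨⟨hchain, hnodup, hlen⟩, hhead, hlast⟩, hint⟩ := hconn
  have hchainG : p.Chain' G.adj := hchain.imp fun a b h => (induce_adj_elim h).1
  refine ⟨⟨⟨hchainG, hnodup, hlen⟩, hhead, hlast⟩, ?_⟩
  intro i v hi hlt hget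
  have hilt : i < p.length := Nat.lt_of_succ_lt hlt
  have him1 : i - 1 + 1 = i := Nat.succ_pred_eq_of_pos hi
  have h1 : (G.induce S).adj (p.get ⟨i - 1, by omega⟩) (p.get ⟨i - 1 + 1, by omega⟩) :=
    List.isChain_iff_getElem.mp hchain (i - 1) (by omega)
  have h2 : (G.induce S).adj (p.get ⟨i, hilt⟩) (p.get ⟨i + 1, hlt⟩) :=
    List.isChain_iff_getElem.mp hchain i (by omega)
  have ga : p[i - 1]? = some (p.get ⟨i - 1, by omega⟩) := List.getElem?_eq_getElem (by omega)
  have gv : p[i]? = some (p.get ⟨i, hilt⟩) := List.getElem?_eq_getElem hilt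
  have gc : p[i + 1]? = some (p.get ⟨i + 1, hlt⟩) := List.getElem?_eq_getElem hlt
  have hveq : v = p.get ⟨i, hilt⟩ := by
    have := hget.symm.trans gv
    exact Option.some.inj this
  have haS : p.get ⟨i - 1, by omega⟩ ∈ S := (induce_adj_elim h1).2.1
  have hvS : v ∈ S := by rw [hveq]; exact (induce_adj_elim h2).2.1
  have hcS : p.get ⟨i + 1, hlt⟩ ∈ S := (induce_adj_elim h2).2.2
  have hvS' : p.get ⟨i - 1 + 1, by omega⟩ ∈ S := (induce_adj_elim h1).2.2
  have hcolEquiv : G.ColliderAt p i ↔ (G.induce S).ColliderAt p i := by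
    constructor
    · rintro ⟨a, w, c, ha, hw, hc, hav, hcv⟩
      have ea : a = p.get ⟨i - 1, by omega⟩ := Option.some.inj (ha.symm.trans ga)
      have ew : w = p.get ⟨i, hilt⟩ := Option.some.inj (hw.symm.trans gv)
      have ec : c = p.get ⟨i + 1, hlt⟩ := Option.some.inj (hc.symm.trans gc)
      refine ⟨a, w, c, ha, hw, hc, ?_, ?_⟩
      · exact induce_head_iff.mpr ⟨hav, by rw [ea]; exact haS, by rw [ew, ← hveq]; exact hvS⟩
      · exact induce_head_iff.mpr ⟨hcv, by rw [ec]; exact hcS, by rw [ew, ← hveq]; exact hvS⟩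
    · rintro ⟨a, w, c, ha, hw, hc, hav, hcv⟩
      exact ⟨a, w, c, ha, hw, hc, (induce_head_iff.mp hav).1, (induce_head_iff.mp hcv).1⟩
  obtain ⟨hcol, hncol⟩ := hint i v hi hlt hget
  constructor
  · intro hc
    have hm := hcol (hcolEquiv.mp hc)
    obtain ⟨y, hy', hanc⟩ := hm
    refine ⟨y, ?_, Relation.ReflTransGen.mono (r := (G.induce S).dir) (p := G.dir) (fun a b h => h.1) v y hanc⟩
    rcases hy' with h | h
    · exact Or.inl h
    · exact Or.inr (Set.mem_insert_iff.mpr (Or.inr h))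
  · intro hnc
    have := hncol (fun h => hnc (hcolEquiv.mpr h))
    intro hmem
    rcases Set.mem_insert_iff.mp hmem with h | h
    · exact hvS (by simpa using h)
    · exact this h
end
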